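/- Let A be a commutative fusion ring satisfying the split semisimplicity, *-character, and trace decomposition assumptions, and fix a character δ with δ(b_i) ≠ 0 for all i. Define I_n(ρ₁,…,ρ_n) := Σ_{i∈I} δ(b_i)^{2−n} ρ₁(b_i)⋯ρ_n(b_i) for characters ρ₁,…,ρ_n. Then for every n ≥ 3 and all characters ρ₁, …, ρ_n of A_ℂ: I_n(ρ₁,…,ρ_n) = Σ_ρ α_ρ^{-1} · I_{n−1}(ρ₁,…,ρ_{n−2},ρ) · I₃(ρ̄, ρ_{n−1}, ρ_n), where the sum is over all characters ρ of A_ℂ and ρ̄ denotes the character with ρ̄(b_i) = conj(ρ(b_i)). -/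

import Mathlib

open scoped BigOperators

/-- A fusion ring datum: finite index set `I`, unit index `zero`, duality involution `dual`,
and structure constants `N` satisfying associativity, unit, duality and symmetry axioms. -/
structure FusionData (I : Type*) [Fintype I] [DecidableEq I] where
  zero : I
  dual : I → I
  N : I → I → I → ℕ
  dual_dual : ∀ i, dual (dual i) = i
  dual_zero : dual zero = zero
  assoc : ∀ i j k l, ∑ m, N i j m * N m k l = ∑ m, N j k m * N i m l
  unit_left : ∀ j m, N zero j m = if j = m then 1 else 0
  unit_right : ∀ i m, N i zero m = if i = m then 1 else 0
  duality : ∀ i j, N i j zero = if j = dual i then 1 else 0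
  sym1 : ∀ i j m, N i j m = N j (dual m) (dual i)
  sym2 : ∀ i j m, N i j m = N (dual m) i (dual j)
  sym3 : ∀ i j m, N i j m = N (dual j) (dual i) (dual m)

/-- The formal codegree `α_ρ = ∑ i, |ρ (b i)|²` of a character `ρ` of the complexified
fusion ring, given as a ℂ-algebra `A` with basis `b`. -/
noncomputable def formalCodegree {I : Type*} [Fintype I] {A : Type*} [CommRing A] [Algebra ℂ A]
    (b : Module.Basis I ℂ A) (ρ : A →ₐ[ℂ] ℂ) : ℝ :=
  ∑ i, Complex.normSq (ρ (b i))

/-- The recursion `I_n(ρ₁,…,ρ_n) = ∑ ρ, α_ρ⁻¹ I_{n-1}(ρ₁,…,ρ_{n-2},ρ) I₃(ρ̄,ρ_{n-1},ρ_n)`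
for `n ≥ 3`, where `I_n(ρ₁,…,ρ_n) := ∑ i, δ(b i)^(2-n) ρ₁(b i)⋯ρ_n(b i)`, the sum is over
all characters `ρ`, and `ρ̄` is the character with `ρ̄(b i) = conj (ρ (b i))`.  Here
`n = m + 2` with `m ≥ 1`, the first `n - 2` characters are `ρ : Fin m → _`, and the last
two are `η₁, η₂`. -/
theorem I_n_recursion {I : Type*} [Fintype I] [DecidableEq I]
    (F : FusionData I)
    {A : Type*} [CommRing A] [Algebra ℂ A] (b : Module.Basis I ℂ A)
    (hb1 : b F.zero = 1)
    (hbmul : ∀ i j, b i * b j = ∑ m, (F.N i j m : ℂ) • b m)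
    -- split semisimplicity: the characters number `|I|` and form a basis of the dual space
    [Fintype (A →ₐ[ℂ] ℂ)]
    (hcard : Fintype.card (A →ₐ[ℂ] ℂ) = Fintype.card I)
    (hind : LinearIndependent ℂ fun ρ : A →ₐ[ℂ] ℂ => (ρ.toLinearMap : A →ₗ[ℂ] ℂ))
    (hspan : ⊤ ≤ Submodule.span ℂ
      (Set.range fun ρ : A →ₐ[ℂ] ℂ => (ρ.toLinearMap : A →ₗ[ℂ] ℂ)))
    -- every character is a *-character
    (hstarchar : ∀ (ρ : A →ₐ[ℂ] ℂ) (i : I), ρ (b (F.dual i)) = starRingEnd ℂ (ρ (b i)))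
    -- the trace decomposition `τ(a) = ∑ ρ, α_ρ⁻¹ ρ(a)`
    (htau : ∀ a : A, (b.repr a F.zero : ℂ)
      = ∑ ρ : A →ₐ[ℂ] ℂ, ((formalCodegree b ρ : ℝ) : ℂ)⁻¹ * ρ a)
    (δ : A →ₐ[ℂ] ℂ) (hδ : ∀ i, δ (b i) ≠ 0)
    -- `conjChar ρ` is the complex conjugate character `ρ̄`
    (conjChar : (A →ₐ[ℂ] ℂ) → (A →ₐ[ℂ] ℂ))
    (hconj : ∀ (ρ : A →ₐ[ℂ] ℂ) (i : I), conjChar ρ (b i) = starRingEnd ℂ (ρ (b i)))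
    (m : ℕ) (hm : 1 ≤ m) (ρ : Fin m → (A →ₐ[ℂ] ℂ)) (η₁ η₂ : A →ₐ[ℂ] ℂ) :
    ∑ i, (δ (b i)) ^ ((2 : ℤ) - ((m : ℤ) + 2)) * ((∏ k, ρ k (b i)) * η₁ (b i) * η₂ (b i))
      = ∑ σ : A →ₐ[ℂ] ℂ, ((formalCodegree b σ : ℝ) : ℂ)⁻¹ *
          (∑ i, (δ (b i)) ^ ((2 : ℤ) - ((m : ℤ) + 1)) * ((∏ k, ρ k (b i)) * σ (b i))) *
          (∑ i, (δ (b i)) ^ (-1 : ℤ) *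
            (conjChar σ (b i) * η₁ (b i) * η₂ (b i))) := by
  classical
  -- key orthogonality: ∑_σ α_σ⁻¹ σ(b i) σ(b (dual j)) = δ_{ij}
  have key : ∀ i j : I,
      (∑ σ : A →ₐ[ℂ] ℂ, ((formalCodegree b σ : ℝ) : ℂ)⁻¹ * (σ (b i) * σ (b (F.dual j))))
        = if j = i then 1 else 0 := by
    intro i j
    have h1 := htau (b i * b (F.dual j))
    have h2 : (b.repr (b i * b (F.dual j)) F.zero : ℂ) = (F.N i (F.dual j) F.zero : ℂ) := by
      rw [hbmul]
      simp [Finsupp.single_apply]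
    have h3 : (F.N i (F.dual j) F.zero : ℂ) = if j = i then 1 else 0 := by
      rw [F.duality]
      by_cases h : j = i
      · simp [h]
      · have hd : F.dual j ≠ F.dual i := fun hd => h (by
          have := congrArg F.dual hd; simpa [F.dual_dual] using this)
        simp [h, hd]
    simp only [map_mul] at h1
    rw [h2, h3] at h1
    exact h1.symm
  symm
  -- rewrite conjChar σ (b j) as σ (b (dual j))
  have hcc : ∀ (σ : A →ₐ[ℂ] ℂ) (j : I), conjChar σ (b j) = σ (b (F.dual j)) := by
    intro σ j; rw [hconj, hstarchar]
  calc
    ∑ σ : A →ₐ[ℂ] ℂ, ((formalCodegree b σ : ℝ) : ℂ)⁻¹ *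
          (∑ i, (δ (b i)) ^ ((2 : ℤ) - ((m : ℤ) + 1)) * ((∏ k, ρ k (b i)) * σ (b i))) *
          (∑ j, (δ (b j)) ^ (-1 : ℤ) * (conjChar σ (b j) * η₁ (b j) * η₂ (b j)))
      = ∑ i, ∑ j, ((δ (b j)) ^ ((2 : ℤ) - ((m : ℤ) + 1)) * (∏ k, ρ k (b j))) *
          ((δ (b i)) ^ (-1 : ℤ) * (η₁ (b i) * η₂ (b i))) *
          (∑ σ : A →ₐ[ℂ] ℂ, ((formalCodegree b σ : ℝ) : ℂ)⁻¹ * (σ (b j) * σ (b (F.dual i)))) := by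
        simp only [hcc, Finset.mul_sum, Finset.sum_mul]
        rw [Finset.sum_comm]
        refine Finset.sum_congr rfl fun i _ => ?_
        rw [Finset.sum_comm]
        refine Finset.sum_congr rfl fun j _ => ?_
        refine Finset.sum_congr rfl fun σ _ => ?_
        ring
    _ = ∑ i, ((δ (b i)) ^ ((2 : ℤ) - ((m : ℤ) + 1)) * (∏ k, ρ k (b i))) *
          ((δ (b i)) ^ (-1 : ℤ) * (η₁ (b i) * η₂ (b i))) := by
        refine Finset.sum_congr rfl fun i _ => ?_
        rw [Finset.sum_eq_single i]
        · rw [key, if_pos rfl, mul_one]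
        · intro j _ hj
          rw [key, if_neg (fun h => hj h.symm), mul_zero]
        · intro h; exact absurd (Finset.mem_univ i) h
    _ = ∑ i, (δ (b i)) ^ ((2 : ℤ) - ((m : ℤ) + 2)) * ((∏ k, ρ k (b i)) * η₁ (b i) * η₂ (b i)) := by
        refine Finset.sum_congr rfl fun i _ => ?_
        have : (δ (b i)) ^ ((2 : ℤ) - ((m : ℤ) + 1)) * (δ (b i)) ^ (-1 : ℤ)
            = (δ (b i)) ^ ((2 : ℤ) - ((m : ℤ) + 2)) := by
          rw [← zpow_add₀ (hδ i)]; ring_nf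
        rw [← this]; ring
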